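/- Let a > 0 and 0 < b < a, let f ∈ C⁰([0,1]) and g ∈ C¹([0,1]). For ε > 0 let k = ⌊√(a² − b²)/(2 a² π ε)⌋, and for an integer m with 1 ≤ m < k and n = k − m define α_{n±} = (−1 ± √((1 − b²/a²) − 4 a² n² ε² π²))/(2ε), c_n = ∫₀¹ f(x) e^{−b x/(2 a² ε)} sin(n π x) dx − (2ε/√((1 − b²/a²) − 4 a² n² ε² π²)) ∫₀¹ (f(x)/(2ε) − g'(x)) e^{−b x/(2 a² ε)} sin(n π x) dx, d_n the same expression with the minus sign between the two terms replaced by a plus sign, and A_n(x,t) = e^{b x/(2 a² ε)} (c_n e^{α_{n−} t} + d_n e^{α_{n+} t}). Then there exist constants B > 0 and δ > 0, depending only on a, b, max|f| and max|g'|, such that for all m ≥ 1 and 0 < ε ≤ δ/m, all x ∈ [0,1], and all t > 0: |A_{k−m}(x,t)| ≤ (B √ε / √m) · exp( (b/(2 a² ε)) ( x − (a²/b)(1 − √(1 − b²/a² − 4 a² ε² (k−m)² π²)) t ) ). -/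

import Mathlib

open Set Real

open MeasureTheory in
lemma exp_integral_bound {c C : ℝ} (hc : 0 < c) (hC : 0 ≤ C) {h : ℝ → ℝ}
    (hint : IntervalIntegrable h volume 0 1)
    (hbd : ∀ x ∈ Icc (0:ℝ) 1, |h x| ≤ C * Real.exp (-(c * x))) :
    |∫ x in (0:ℝ)..1, h x| ≤ C / c := by
  have h1 : |∫ x in (0:ℝ)..1, h x| ≤ ∫ x in (0:ℝ)..1, |h x| := by
    simpa using intervalIntegral.norm_integral_le_integral_norm (μ := volume)
      (f := h) (a := 0) (b := 1) (by norm_num)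
  have hint2 : IntervalIntegrable (fun x => C * Real.exp (-(c * x))) volume 0 1 := by
    apply Continuous.intervalIntegrable; continuity
  have h2 : ∫ x in (0:ℝ)..1, |h x| ≤ ∫ x in (0:ℝ)..1, C * Real.exp (-(c * x)) := by
    apply intervalIntegral.integral_mono_on (by norm_num) hint.abs hint2
    intro x hx; exact hbd x hx
  have h3 : ∫ x in (0:ℝ)..1, Real.exp (-(c * x)) = (1 - Real.exp (-c)) / c := by
    have : ∀ x : ℝ, -(c * x) = (-c) * x := by intro x; ring
    simp_rw [this]
    rw [intervalIntegral.integral_comp_mul_left (fun y => Real.exp y) (by linarith : (-c) ≠ 0)]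
    have hc0 : c ≠ 0 := ne_of_gt hc
    simp [integral_exp]
    rw [div_eq_mul_inv]
    ring
  have h4 : ∫ x in (0:ℝ)..1, C * Real.exp (-(c * x)) = C * ((1 - Real.exp (-c)) / c) := by
    rw [intervalIntegral.integral_const_mul, h3]
  have h5 : C * ((1 - Real.exp (-c)) / c) ≤ C / c := by
    have he : 0 ≤ Real.exp (-c) := (Real.exp_pos _).le
    have h6 : (1 - Real.exp (-c)) / c ≤ 1 / c := (div_le_div_iff_of_pos_right hc).2 (by linarith)
    calc C * ((1 - Real.exp (-c)) / c) ≤ C * (1 / c) := mul_le_mul_of_nonneg_left h6 hC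
      _ = C / c := by ring
  linarith

/-- `α_{n−}` in the Fourier series solution. -/
noncomputable def alphaM (a b ε : ℝ) (n : ℕ) : ℝ :=
  (-1 - Real.sqrt ((1 - b ^ 2 / a ^ 2) - 4 * a ^ 2 * n ^ 2 * ε ^ 2 * Real.pi ^ 2)) / (2 * ε)

/-- `α_{n+}` in the Fourier series solution. -/
noncomputable def alphaP (a b ε : ℝ) (n : ℕ) : ℝ :=
  (-1 + Real.sqrt ((1 - b ^ 2 / a ^ 2) - 4 * a ^ 2 * n ^ 2 * ε ^ 2 * Real.pi ^ 2)) / (2 * ε)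

/-- The coefficient `c_n` of the exponential Fourier modes. -/
noncomputable def cCoef (a b ε : ℝ) (f g : ℝ → ℝ) (n : ℕ) : ℝ :=
  (∫ x in (0:ℝ)..1, f x * Real.exp (-(b * x) / (2 * a ^ 2 * ε)) * Real.sin (n * Real.pi * x))
    - (2 * ε / Real.sqrt ((1 - b ^ 2 / a ^ 2) - 4 * a ^ 2 * n ^ 2 * ε ^ 2 * Real.pi ^ 2)) *
      ∫ x in (0:ℝ)..1, (f x / (2 * ε) - deriv g x) *
        Real.exp (-(b * x) / (2 * a ^ 2 * ε)) * Real.sin (n * Real.pi * x)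

/-- The coefficient `d_n` of the exponential Fourier modes. -/
noncomputable def dCoef (a b ε : ℝ) (f g : ℝ → ℝ) (n : ℕ) : ℝ :=
  (∫ x in (0:ℝ)..1, f x * Real.exp (-(b * x) / (2 * a ^ 2 * ε)) * Real.sin (n * Real.pi * x))
    + (2 * ε / Real.sqrt ((1 - b ^ 2 / a ^ 2) - 4 * a ^ 2 * n ^ 2 * ε ^ 2 * Real.pi ^ 2)) *
      ∫ x in (0:ℝ)..1, (f x / (2 * ε) - deriv g x) *
        Real.exp (-(b * x) / (2 * a ^ 2 * ε)) * Real.sin (n * Real.pi * x)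

/-- The amplitude `A_n(x,t) = e^{bx/(2a²ε)} (c_n e^{α_{n−}t} + d_n e^{α_{n+}t})`. -/
noncomputable def Amp (a b ε : ℝ) (f g : ℝ → ℝ) (n : ℕ) (x t : ℝ) : ℝ :=
  Real.exp (b * x / (2 * a ^ 2 * ε)) *
    (cCoef a b ε f g n * Real.exp (alphaM a b ε n * t)
      + dCoef a b ε f g n * Real.exp (alphaP a b ε n * t))

set_option maxHeartbeats 2000000 in
/-- Bound on the amplitudes of the exponential modes `n = k − m`, where
`k = ⌊√(a² − b²)/(2a²πε)⌋`: there are `B > 0` and `δ > 0`, depending only on `a`, `b`,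
`max |f|` and `max |g'|`, such that for all `m ≥ 1`, `0 < ε ≤ δ/m`, `x ∈ [0,1]`, `t > 0`:
`|A_{k−m}(x,t)| ≤ (B√ε/√m) exp((b/(2a²ε)) (x − (a²/b)(1 − √(1 − b²/a² − 4a²ε²(k−m)²π²)) t))`. -/
theorem lower_modes_bound
    (a b : ℝ) (ha : 0 < a) (hb : 0 < b) (hba : b < a)
    (f g : ℝ → ℝ) (hf : ContinuousOn f (Icc 0 1)) (hg : ContDiffOn ℝ 1 g (Icc 0 1)) :
    ∃ B > (0:ℝ), ∃ δ > (0:ℝ), ∀ m : ℕ, 1 ≤ m → ∀ ε : ℝ, 0 < ε → ε ≤ δ / m →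
      ∀ k : ℕ, k = ⌊Real.sqrt (a ^ 2 - b ^ 2) / (2 * a ^ 2 * π * ε)⌋₊ → m < k →
        ∀ x ∈ Icc (0:ℝ) 1, ∀ t : ℝ, 0 < t →
          |Amp a b ε f g (k - m) x t| ≤ (B * Real.sqrt ε / Real.sqrt m) *
            Real.exp ((b / (2 * a ^ 2 * ε)) *
              (x - (a ^ 2 / b) *
                (1 - Real.sqrt (1 - b ^ 2 / a ^ 2
                  - 4 * a ^ 2 * ε ^ 2 * ((k : ℝ) - m) ^ 2 * π ^ 2)) * t)) := by
  -- bounds on f and g'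
  obtain ⟨Mf, hMf⟩ := isCompact_Icc.exists_bound_of_continuousOn hf
  set G : ℝ → ℝ := derivWithin g (Icc 0 1) with hG
  have hGcont : ContinuousOn G (Icc 0 1) :=
    hg.continuousOn_derivWithin (uniqueDiffOn_Icc (by norm_num)) le_rfl
  obtain ⟨Mg, hMg⟩ := isCompact_Icc.exists_bound_of_continuousOn hGcont
  have hMf0 : 0 ≤ Mf := le_trans (norm_nonneg _) (hMf 0 ⟨le_refl 0, by norm_num⟩)
  have hMg0 : 0 ≤ Mg := le_trans (norm_nonneg _) (hMg 0 ⟨le_refl 0, by norm_num⟩)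
  -- c₀
  set c₀ : ℝ := Real.sqrt (1 - b ^ 2 / a ^ 2) with hc₀def
  have hba2 : b ^ 2 / a ^ 2 < 1 := by
    rw [div_lt_one (by positivity)]
    nlinarith
  have hc₀pos : 0 < c₀ := Real.sqrt_pos.2 (by linarith)
  have hc₀sq : c₀ ^ 2 = 1 - b ^ 2 / a ^ 2 := Real.sq_sqrt (by linarith)
  refine ⟨4 * a ^ 2 * Mf / b
      + (4 / Real.sqrt (2 * a * π * c₀)) * (a ^ 2 * Mf / b + 2 * a ^ 2 * Mg / b) + 1,
    by
      have h1 : (0:ℝ) ≤ 4 * a ^ 2 * Mf / b :=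
        div_nonneg (mul_nonneg (by positivity) hMf0) hb.le
      have h2 : (0:ℝ) ≤ (4 / Real.sqrt (2 * a * π * c₀)) *
          (a ^ 2 * Mf / b + 2 * a ^ 2 * Mg / b) := by
        apply mul_nonneg (by positivity)
        have h3 : (0:ℝ) ≤ a ^ 2 * Mf / b := div_nonneg (mul_nonneg (sq_nonneg a) hMf0) hb.le
        have h4 : (0:ℝ) ≤ 2 * a ^ 2 * Mg / b :=
          div_nonneg (mul_nonneg (by positivity) hMg0) hb.le
        linarith
      linarith, 1, one_pos, ?_⟩
  intro m hm ε hε hεδ k hk hmk x hx t ht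
  set Bv : ℝ := 4 * a ^ 2 * Mf / b
      + (4 / Real.sqrt (2 * a * π * c₀)) * (a ^ 2 * Mf / b + 2 * a ^ 2 * Mg / b) + 1 with hBv
  have hmR : (1:ℝ) ≤ (m:ℝ) := by exact_mod_cast hm
  have hmpos : (0:ℝ) < (m:ℝ) := by linarith
  have hε1 : ε ≤ 1 / (m:ℝ) := by simpa using hεδ
  have hεle1 : ε ≤ 1 := hε1.trans (by rw [div_le_one hmpos]; exact hmR)
  have hcast : ((k - m : ℕ) : ℝ) = (k:ℝ) - (m:ℝ) := by
    exact_mod_cast Nat.cast_sub hmk.le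
  have harg : (1 - b ^ 2 / a ^ 2) - 4 * a ^ 2 * ((k - m : ℕ):ℝ) ^ 2 * ε ^ 2 * Real.pi ^ 2
      = 1 - b ^ 2 / a ^ 2 - 4 * a ^ 2 * ε ^ 2 * ((k : ℝ) - (m:ℝ)) ^ 2 * π ^ 2 := by
    rw [hcast]; ring
  -- k is at most the unfloored value
  have hkle : (k:ℝ) ≤ Real.sqrt (a ^ 2 - b ^ 2) / (2 * a ^ 2 * π * ε) := by
    rw [hk]; exact Nat.floor_le (by positivity)
  have hsab : Real.sqrt (a ^ 2 - b ^ 2) = a * c₀ := by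
    have e : a ^ 2 - b ^ 2 = a ^ 2 * (1 - b ^ 2 / a ^ 2) := by field_simp
    rw [e, hc₀def, Real.sqrt_mul (by positivity), Real.sqrt_sq ha.le]
  have h2 : 2 * a * π * ε * (k:ℝ) ≤ c₀ := by
    have h3 : (k:ℝ) * (2 * a ^ 2 * π * ε) ≤ a * c₀ := by
      rw [← hsab]; exact (le_div_iff₀ (by positivity)).mp hkle
    nlinarith [ha]
  have hNk : (0:ℝ) ≤ (k:ℝ) - (m:ℝ) := by
    have : (m:ℝ) ≤ (k:ℝ) := by exact_mod_cast hmk.le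
    linarith
  -- lower bound for the discriminant
  have hD : 2 * a * π * c₀ * (ε * m) ≤
      (1 - b ^ 2 / a ^ 2) - 4 * a ^ 2 * ((k - m : ℕ):ℝ) ^ 2 * ε ^ 2 * Real.pi ^ 2 := by
    rw [harg, ← hc₀sq]
    have hA : 0 ≤ c₀ - 2 * a * π * ε * (k:ℝ) := by linarith
    have ht1 : 0 ≤ (c₀ - 2 * a * π * ε * (k:ℝ)) * c₀ := mul_nonneg hA hc₀pos.le
    have ht2 : 0 ≤ (c₀ - 2 * a * π * ε * (k:ℝ)) * (2 * a * π * ε * ((k:ℝ) - (m:ℝ))) :=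
      mul_nonneg hA (mul_nonneg (by positivity) hNk)
    have ht3 : 0 ≤ (2 * a * π * ε * (m:ℝ)) * (2 * a * π * ε * ((k:ℝ) - (m:ℝ))) :=
      mul_nonneg (by positivity) (mul_nonneg (by positivity) hNk)
    have expand : c₀ ^ 2 - 4 * a ^ 2 * ε ^ 2 * ((k:ℝ) - (m:ℝ)) ^ 2 * π ^ 2
          - 2 * a * π * c₀ * (ε * (m:ℝ))
        = (c₀ - 2 * a * π * ε * (k:ℝ)) * c₀
          + (c₀ - 2 * a * π * ε * (k:ℝ)) * (2 * a * π * ε * ((k:ℝ) - (m:ℝ)))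
          + (2 * a * π * ε * (m:ℝ)) * (2 * a * π * ε * ((k:ℝ) - (m:ℝ))) := by ring
    linarith [expand]
  set SS : ℝ := Real.sqrt
      ((1 - b ^ 2 / a ^ 2) - 4 * a ^ 2 * ((k - m : ℕ):ℝ) ^ 2 * ε ^ 2 * Real.pi ^ 2) with hSSdef
  have hSpos : 0 < SS := Real.sqrt_pos.2 (lt_of_lt_of_le (by positivity) hD)
  have hSlow : Real.sqrt (2 * a * π * c₀) * (Real.sqrt ε * Real.sqrt (m:ℝ)) ≤ SS := by
    rw [hSSdef, ← Real.sqrt_mul hε.le, ← Real.sqrt_mul (by positivity)]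
    exact Real.sqrt_le_sqrt hD
  -- ε ≤ √ε/√m
  have hsqm : Real.sqrt ε ≤ 1 / Real.sqrt (m:ℝ) := by
    rw [le_div_iff₀ (Real.sqrt_pos.2 hmpos), ← Real.sqrt_mul hε.le]
    exact Real.sqrt_le_one.2 ((le_div_iff₀ hmpos).mp hε1)
  have hεsq : ε ≤ Real.sqrt ε / Real.sqrt (m:ℝ) := by
    calc ε = Real.sqrt ε * Real.sqrt ε := (Real.mul_self_sqrt hε.le).symm
      _ ≤ Real.sqrt ε * (1 / Real.sqrt (m:ℝ)) :=
        mul_le_mul_of_nonneg_left hsqm (Real.sqrt_nonneg _)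
      _ = Real.sqrt ε / Real.sqrt (m:ℝ) := by ring
  have hsqnn : 0 ≤ Real.sqrt ε / Real.sqrt (m:ℝ) := by positivity
  -- the integrands
  set n : ℕ := k - m with hn
  have hexp_eq : ∀ y : ℝ, -(b * y) / (2 * a ^ 2 * ε) = -(b / (2 * a ^ 2 * ε) * y) := by
    intro y; ring
  have hccpos : 0 < b / (2 * a ^ 2 * ε) := by positivity
  have huIcc : Set.uIcc (0:ℝ) 1 = Icc (0:ℝ) 1 := Set.uIcc_of_le (by norm_num)
  have hcontE : Continuous fun y : ℝ => Real.exp (-(b * y) / (2 * a ^ 2 * ε)) := by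
    fun_prop
  have hconts : Continuous fun y : ℝ => Real.sin ((n:ℝ) * Real.pi * y) := by fun_prop
  -- bound on I1
  have hI1b : |∫ y in (0:ℝ)..1, f y * Real.exp (-(b * y) / (2 * a ^ 2 * ε))
        * Real.sin ((n:ℝ) * Real.pi * y)| ≤ Mf / (b / (2 * a ^ 2 * ε)) := by
    apply exp_integral_bound hccpos hMf0
    · apply ContinuousOn.intervalIntegrable
      rw [huIcc]
      exact (hf.mul hcontE.continuousOn).mul hconts.continuousOn
    · intro y hy
      have h5 := hMf y hy
      rw [Real.norm_eq_abs] at h5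
      calc |f y * Real.exp (-(b * y) / (2 * a ^ 2 * ε)) * Real.sin ((n:ℝ) * Real.pi * y)|
          = |f y| * Real.exp (-(b * y) / (2 * a ^ 2 * ε)) * |Real.sin ((n:ℝ) * Real.pi * y)| := by
            rw [abs_mul, abs_mul, abs_of_pos (Real.exp_pos _)]
        _ ≤ Mf * Real.exp (-(b * y) / (2 * a ^ 2 * ε)) * 1 := by
            apply mul_le_mul _ (abs_le.2 ⟨Real.neg_one_le_sin _, Real.sin_le_one _⟩) (abs_nonneg _) _
            · exact mul_le_mul_of_nonneg_right h5 (Real.exp_pos _).le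
            · positivity
        _ = Mf * Real.exp (-(b / (2 * a ^ 2 * ε) * y)) := by rw [hexp_eq y]; ring
  -- replace deriv g by derivWithin in I2
  have hI2eq : (∫ y in (0:ℝ)..1, (f y / (2 * ε) - deriv g y)
          * Real.exp (-(b * y) / (2 * a ^ 2 * ε)) * Real.sin ((n:ℝ) * Real.pi * y))
      = ∫ y in (0:ℝ)..1, (f y / (2 * ε) - G y)
          * Real.exp (-(b * y) / (2 * a ^ 2 * ε)) * Real.sin ((n:ℝ) * Real.pi * y) := by
    apply intervalIntegral.integral_congr_ae
    have h1 : ∀ᵐ (y : ℝ), y ≠ 1 := by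
      rw [MeasureTheory.ae_iff]
      have : {y : ℝ | ¬ y ≠ 1} = {1} := by ext y; simp
      rw [this]
      exact Real.volume_singleton
    filter_upwards [h1] with y hy hymem
    rw [Set.uIoc_of_le (by norm_num : (0:ℝ) ≤ 1)] at hymem
    have hyIoo : y ∈ Ioo (0:ℝ) 1 := ⟨hymem.1, lt_of_le_of_ne hymem.2 hy⟩
    have hder : deriv g y = G y :=
      (derivWithin_of_mem_nhds (Icc_mem_nhds hyIoo.1 hyIoo.2)).symm
    rw [hder]
  -- bound on I2
  have hI2b : |∫ y in (0:ℝ)..1, (f y / (2 * ε) - deriv g y)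
        * Real.exp (-(b * y) / (2 * a ^ 2 * ε)) * Real.sin ((n:ℝ) * Real.pi * y)|
      ≤ (Mf / (2 * ε) + Mg) / (b / (2 * a ^ 2 * ε)) := by
    rw [hI2eq]
    have hC0 : (0:ℝ) ≤ Mf / (2 * ε) + Mg := by
      have := div_nonneg hMf0 (by positivity : (0:ℝ) ≤ 2 * ε); linarith
    apply exp_integral_bound hccpos hC0
    · apply ContinuousOn.intervalIntegrable
      rw [huIcc]
      exact (((hf.div_const _).sub hGcont).mul hcontE.continuousOn).mul hconts.continuousOn
    · intro y hy
      have h5 := hMf y hy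
      have h6 := hMg y hy
      rw [Real.norm_eq_abs] at h5 h6
      have h7 : |f y / (2 * ε) - G y| ≤ Mf / (2 * ε) + Mg := by
        calc |f y / (2 * ε) - G y| ≤ |f y / (2 * ε)| + |G y| := abs_sub _ _
          _ ≤ Mf / (2 * ε) + Mg := by
            apply add_le_add _ h6
            rw [abs_div, abs_of_pos (by positivity : (0:ℝ) < 2 * ε)]
            exact (div_le_div_iff_of_pos_right (by positivity : (0:ℝ) < 2 * ε)).2 h5
      calc |(f y / (2 * ε) - G y) * Real.exp (-(b * y) / (2 * a ^ 2 * ε))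
            * Real.sin ((n:ℝ) * Real.pi * y)|
          = |f y / (2 * ε) - G y| * Real.exp (-(b * y) / (2 * a ^ 2 * ε))
            * |Real.sin ((n:ℝ) * Real.pi * y)| := by
            rw [abs_mul, abs_mul, abs_of_pos (Real.exp_pos _)]
        _ ≤ (Mf / (2 * ε) + Mg) * Real.exp (-(b * y) / (2 * a ^ 2 * ε)) * 1 := by
            apply mul_le_mul _ (abs_le.2 ⟨Real.neg_one_le_sin _, Real.sin_le_one _⟩)
              (abs_nonneg _) _
            · exact mul_le_mul_of_nonneg_right h7 (Real.exp_pos _).le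
            · positivity
        _ = (Mf / (2 * ε) + Mg) * Real.exp (-(b / (2 * a ^ 2 * ε) * y)) := by
            rw [hexp_eq y]; ring
  -- assemble
  simp only [Amp, cCoef, dCoef, alphaM, alphaP]
  rw [← harg, ← hSSdef]
  set I1 : ℝ := ∫ y in (0:ℝ)..1, f y * Real.exp (-(b * y) / (2 * a ^ 2 * ε))
      * Real.sin ((n:ℝ) * Real.pi * y) with hI1d
  set I2 : ℝ := ∫ y in (0:ℝ)..1, (f y / (2 * ε) - deriv g y)
      * Real.exp (-(b * y) / (2 * a ^ 2 * ε)) * Real.sin ((n:ℝ) * Real.pi * y) with hI2d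
  have hJnn : (0:ℝ) ≤ 2 * ε / SS := by positivity
  have hcd : |I1 - 2 * ε / SS * I2| + |I1 + 2 * ε / SS * I2|
      ≤ 2 * |I1| + 2 * (2 * ε / SS * |I2|) := by
    have h1 := abs_sub I1 (2 * ε / SS * I2)
    have h2 := abs_add_le I1 (2 * ε / SS * I2)
    rw [abs_mul, abs_of_nonneg hJnn] at h1 h2
    linarith
  have hq1 : |I1| ≤ 2 * a ^ 2 * Mf / b * ε := by
    refine hI1b.trans (le_of_eq ?_)
    field_simp
  have hq2 : |I2| ≤ a ^ 2 * Mf / b + 2 * a ^ 2 * Mg / b := by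
    refine hI2b.trans ?_
    have e2 : (Mf / (2 * ε) + Mg) / (b / (2 * a ^ 2 * ε))
        = a ^ 2 * Mf / b + 2 * a ^ 2 * Mg / b * ε := by field_simp
    rw [e2]
    have h10 : (0:ℝ) ≤ 2 * a ^ 2 * Mg / b :=
      div_nonneg (mul_nonneg (by positivity) hMg0) hb.le
    have h11 : 2 * a ^ 2 * Mg / b * ε ≤ 2 * a ^ 2 * Mg / b * 1 :=
      mul_le_mul_of_nonneg_left hεle1 h10
    linarith [h11]
  have hQpos : (0:ℝ) < Real.sqrt (2 * a * π * c₀) := Real.sqrt_pos.2 (by positivity)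
  have hJle : 2 * ε / SS
      ≤ 2 / Real.sqrt (2 * a * π * c₀) * (Real.sqrt ε / Real.sqrt (m:ℝ)) := by
    rw [div_le_iff₀ hSpos]
    have hkey : 2 / Real.sqrt (2 * a * π * c₀) * (Real.sqrt ε / Real.sqrt (m:ℝ))
        * (Real.sqrt (2 * a * π * c₀) * (Real.sqrt ε * Real.sqrt (m:ℝ))) = 2 * ε := by
      rw [show (2:ℝ) / Real.sqrt (2 * a * π * c₀) * (Real.sqrt ε / Real.sqrt (m:ℝ))
          * (Real.sqrt (2 * a * π * c₀) * (Real.sqrt ε * Real.sqrt (m:ℝ)))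
          = 2 * (Real.sqrt ε * Real.sqrt ε)
            * (Real.sqrt (2 * a * π * c₀) / Real.sqrt (2 * a * π * c₀))
            * (Real.sqrt (m:ℝ) / Real.sqrt (m:ℝ)) from by ring]
      rw [Real.mul_self_sqrt hε.le, div_self (ne_of_gt hQpos),
        div_self (ne_of_gt (Real.sqrt_pos.2 hmpos))]
      ring
    calc 2 * ε = 2 / Real.sqrt (2 * a * π * c₀) * (Real.sqrt ε / Real.sqrt (m:ℝ))
          * (Real.sqrt (2 * a * π * c₀) * (Real.sqrt ε * Real.sqrt (m:ℝ))) := hkey.symm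
      _ ≤ 2 / Real.sqrt (2 * a * π * c₀) * (Real.sqrt ε / Real.sqrt (m:ℝ)) * SS :=
          mul_le_mul_of_nonneg_left hSlow (by positivity)
  have hterm2 : 2 * ε / SS * |I2|
      ≤ 2 / Real.sqrt (2 * a * π * c₀) * (Real.sqrt ε / Real.sqrt (m:ℝ))
        * (a ^ 2 * Mf / b + 2 * a ^ 2 * Mg / b) :=
    mul_le_mul hJle hq2 (abs_nonneg _) (by positivity)
  have hterm1 : |I1| ≤ 2 * a ^ 2 * Mf / b * (Real.sqrt ε / Real.sqrt (m:ℝ)) := by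
    refine hq1.trans ?_
    apply mul_le_mul_of_nonneg_left hεsq
    exact div_nonneg (mul_nonneg (by positivity) hMf0) hb.le
  have hnum : 2 * |I1| + 2 * (2 * ε / SS * |I2|)
      ≤ Bv * (Real.sqrt ε / Real.sqrt (m:ℝ)) := by
    have expand : Bv * (Real.sqrt ε / Real.sqrt (m:ℝ))
        = 2 * (2 * a ^ 2 * Mf / b * (Real.sqrt ε / Real.sqrt (m:ℝ)))
          + 2 * (2 / Real.sqrt (2 * a * π * c₀) * (Real.sqrt ε / Real.sqrt (m:ℝ))
            * (a ^ 2 * Mf / b + 2 * a ^ 2 * Mg / b))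
          + (Real.sqrt ε / Real.sqrt (m:ℝ)) := by rw [hBv]; ring
    linarith [hterm1, hterm2, hsqnn]
  have hEle : Real.exp ((-1 - SS) / (2 * ε) * t) ≤ Real.exp ((-1 + SS) / (2 * ε) * t) := by
    apply Real.exp_le_exp.2
    apply mul_le_mul_of_nonneg_right _ ht.le
    apply (div_le_div_iff_of_pos_right (by positivity : (0:ℝ) < 2 * ε)).2
    linarith [hSpos]
  calc |Real.exp (b * x / (2 * a ^ 2 * ε))
        * ((I1 - 2 * ε / SS * I2) * Real.exp ((-1 - SS) / (2 * ε) * t)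
          + (I1 + 2 * ε / SS * I2) * Real.exp ((-1 + SS) / (2 * ε) * t))|
      = Real.exp (b * x / (2 * a ^ 2 * ε))
        * |(I1 - 2 * ε / SS * I2) * Real.exp ((-1 - SS) / (2 * ε) * t)
          + (I1 + 2 * ε / SS * I2) * Real.exp ((-1 + SS) / (2 * ε) * t)| := by
        rw [abs_mul, abs_of_pos (Real.exp_pos _)]
    _ ≤ Real.exp (b * x / (2 * a ^ 2 * ε))
        * ((2 * |I1| + 2 * (2 * ε / SS * |I2|)) * Real.exp ((-1 + SS) / (2 * ε) * t)) := by
        apply mul_le_mul_of_nonneg_left _ (Real.exp_pos _).le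
        have step1 : |(I1 - 2 * ε / SS * I2) * Real.exp ((-1 - SS) / (2 * ε) * t)
            + (I1 + 2 * ε / SS * I2) * Real.exp ((-1 + SS) / (2 * ε) * t)|
            ≤ (|I1 - 2 * ε / SS * I2| + |I1 + 2 * ε / SS * I2|)
              * Real.exp ((-1 + SS) / (2 * ε) * t) := by
          refine (abs_add_le _ _).trans ?_
          rw [abs_mul, abs_mul, abs_of_pos (Real.exp_pos _), abs_of_pos (Real.exp_pos _),
            add_mul]
          exact add_le_add (mul_le_mul_of_nonneg_left hEle (abs_nonneg _)) le_rfl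
        exact step1.trans (mul_le_mul_of_nonneg_right hcd (Real.exp_pos _).le)
    _ ≤ Real.exp (b * x / (2 * a ^ 2 * ε))
        * ((Bv * (Real.sqrt ε / Real.sqrt (m:ℝ))) * Real.exp ((-1 + SS) / (2 * ε) * t)) := by
        apply mul_le_mul_of_nonneg_left _ (Real.exp_pos _).le
        exact mul_le_mul_of_nonneg_right hnum (Real.exp_pos _).le
    _ = Bv * Real.sqrt ε / Real.sqrt (m:ℝ)
        * Real.exp (b * x / (2 * a ^ 2 * ε) + (-1 + SS) / (2 * ε) * t) := by
        rw [Real.exp_add]; ring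
    _ = Bv * Real.sqrt ε / Real.sqrt (m:ℝ)
        * Real.exp ((b / (2 * a ^ 2 * ε)) * (x - a ^ 2 / b * (1 - SS) * t)) := by
        congr 1
        field_simp
        ring
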